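/- Let C be a weakly abelian category and let f : X ⟶ Y and g : Y ⟶ Z be morphisms in C. Then f is a weak kernel of g if and only if g is a weak cokernel of f. -/
import Mathlib


open CategoryTheory CategoryTheory.Limits

/-- `i : K ⟶ X` is a *weak kernel* of `f : X ⟶ Y` if `i ≫ f = 0` and every `t : T ⟶ X` with
`t ≫ f = 0` factors through `i`. -/
def IsWeakKernel {C : Type*} [Category C] [HasZeroMorphisms C]
    {K X Y : C} (i : K ⟶ X) (f : X ⟶ Y) : Prop :=
  i ≫ f = 0 ∧ ∀ ⦃T : C⦄ (t : T ⟶ X), t ≫ f = 0 → ∃ t' : T ⟶ K, t' ≫ i = t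

/-- `p : Y ⟶ Q` is a *weak cokernel* of `f : X ⟶ Y` if `f ≫ p = 0` and every `s : Y ⟶ T` with
`f ≫ s = 0` factors through `p`. -/
def IsWeakCokernel {C : Type*} [Category C] [HasZeroMorphisms C]
    {X Y Q : C} (f : X ⟶ Y) (p : Y ⟶ Q) : Prop :=
  f ≫ p = 0 ∧ ∀ ⦃T : C⦄ (s : Y ⟶ T), f ≫ s = 0 → ∃ s' : Q ⟶ T, p ≫ s' = s

/-- An additive category is *weakly abelian* if every morphism has a weak kernel and a weak
cokernel, and every morphism is a weak kernel of some morphism and a weak cokernel of some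
morphism. -/
def WeaklyAbelian (C : Type*) [Category C] [Preadditive C] [HasZeroObject C]
    [HasFiniteBiproducts C] : Prop :=
  (∀ ⦃X Y : C⦄ (f : X ⟶ Y), ∃ (K : C) (i : K ⟶ X), IsWeakKernel i f) ∧
  (∀ ⦃X Y : C⦄ (f : X ⟶ Y), ∃ (Q : C) (p : Y ⟶ Q), IsWeakCokernel f p) ∧
  (∀ ⦃X Y : C⦄ (f : X ⟶ Y), ∃ (Z : C) (g : Y ⟶ Z), IsWeakKernel f g) ∧
  (∀ ⦃X Y : C⦄ (f : X ⟶ Y), ∃ (W : C) (e : W ⟶ X), IsWeakCokernel e f)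

/-- In a weakly abelian category, `f` is a weak kernel of `g` if and only if `g` is a weak
cokernel of `f`. -/
theorem isWeakKernel_iff_isWeakCokernel {C : Type*} [Category C] [Preadditive C]
    [HasZeroObject C] [HasFiniteBiproducts C] (hC : WeaklyAbelian C)
    {X Y Z : C} (f : X ⟶ Y) (g : Y ⟶ Z) :
    IsWeakKernel f g ↔ IsWeakCokernel f g := by
  constructor
  · rintro ⟨hfg, hf⟩
    obtain ⟨W, h, hh⟩ := hC.2.2.2 g
    obtain ⟨h', hh'⟩ := hf h hh.1
    refine ⟨hfg, fun T s hs => ?_⟩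
    exact hh.2 s (by rw [← hh', Category.assoc, hs, comp_zero])
  · rintro ⟨hfg, hg⟩
    obtain ⟨V, m, hm⟩ := hC.2.2.1 f
    obtain ⟨m', hm'⟩ := hg m hm.1
    refine ⟨hfg, fun T t ht => ?_⟩
    exact hm.2 t (by rw [← hm', ← Category.assoc, ht, zero_comp])
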